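/- For every integer k ≥ 3 and every real α with π/2 < α < π − π/k, there exist a spherical triangle Δ (given by linearly independent unit vectors in ℝ³) whose corner angles are α, π − α, and 2π/k, and a family T₁, …, T_{2k} of subsets of the unit sphere S² in ℝ³ such that each Tᵢ is the image of Δ under a linear isometry of ℝ³, the union of the Tᵢ is S², and the interiors of the Tᵢ in the subspace topology of S² are pairwise disjoint. -/

import Mathlib

open scoped RealInnerProductSpace

/-- The corner angle of the spherical triangle with vertices `A`, `B`, `C` at the
vertex `A`: the angle between the orthogonal projections of `B` and `C` onto the
tangent plane of the unit sphere at `A`. -/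
noncomputable def cornerAngle (A B C : EuclideanSpace ℝ (Fin 3)) : ℝ :=
  InnerProductGeometry.angle (B - ⟪B, A⟫ • A) (C - ⟪C, A⟫ • A)

/-- The spherical triangle with vertices `A`, `B`, `C`: the intersection of the unit
sphere with the cone `{sA + tB + uC : s, t, u ≥ 0}`. -/
def sphericalTriangle (A B C : EuclideanSpace ℝ (Fin 3)) : Set (EuclideanSpace ℝ (Fin 3)) :=
  Metric.sphere 0 1 ∩
    {x | ∃ s t u : ℝ, 0 ≤ s ∧ 0 ≤ t ∧ 0 ≤ u ∧ x = s • A + t • B + u • C}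

set_option linter.unusedSectionVars false
set_option linter.unusedVariables false
set_option linter.unreachableTactic false
set_option linter.unusedTactic false
set_option linter.unnecessarySeqFocus false

noncomputable section
namespace TwoLayerAux
open Real

abbrev E3 := EuclideanSpace ℝ (Fin 3)

def mk3 (a b c : ℝ) : E3 := WithLp.toLp 2 ![a, b, c]

@[simp] lemma mk3_zero (a b c : ℝ) : mk3 a b c 0 = a := rfl
@[simp] lemma mk3_one (a b c : ℝ) : mk3 a b c 1 = b := rfl
@[simp] lemma mk3_two (a b c : ℝ) : mk3 a b c 2 = c := rfl

lemma ext3 (x y : E3) (h0 : x 0 = y 0) (h1 : x 1 = y 1) (h2 : x 2 = y 2) : x = y := by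
  apply PiLp.ext; intro i; fin_cases i <;> assumption

@[simp] lemma inner3 (x y : E3) : ⟪x, y⟫ = x 0 * y 0 + x 1 * y 1 + x 2 * y 2 := by
  rw [PiLp.inner_apply, Fin.sum_univ_three]; norm_num [RCLike.inner_apply]; ring

lemma norm3 (x : E3) : ‖x‖ = Real.sqrt (x 0 ^ 2 + x 1 ^ 2 + x 2 ^ 2) := by
  rw [EuclideanSpace.norm_eq]; simp [Fin.sum_univ_three, Real.norm_eq_abs, sq_abs]

@[simp] lemma add3 (x y : E3) (i : Fin 3) : (x + y) i = x i + y i := rfl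
@[simp] lemma sub3 (x y : E3) (i : Fin 3) : (x - y) i = x i - y i := rfl
@[simp] lemma smul3 (t : ℝ) (x : E3) (i : Fin 3) : (t • x) i = t * x i := rfl
@[simp] lemma neg3 (x : E3) (i : Fin 3) : (-x) i = -(x i) := rfl
@[simp] lemma zero3 (i : Fin 3) : (0 : E3) i = 0 := rfl

/-! ### Isometries -/

def rotZL (γ : ℝ) : E3 →ₗ[ℝ] E3 where
  toFun v := mk3 (cos γ * v 0 - sin γ * v 1) (sin γ * v 0 + cos γ * v 1) (v 2)
  map_add' x y := by apply ext3 <;> (simp; try ring)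
  map_smul' t x := by apply ext3 <;> (simp; try ring)

@[simp] lemma rotZL_apply (γ : ℝ) (v : E3) :
    rotZL γ v = mk3 (cos γ * v 0 - sin γ * v 1) (sin γ * v 0 + cos γ * v 1) (v 2) := rfl

lemma rotZL_inv (γ : ℝ) (v : E3) : rotZL (-γ) (rotZL γ v) = v := by
  apply ext3
  · simp; linear_combination (v 0) * sin_sq_add_cos_sq γ
  · simp; linear_combination (v 1) * sin_sq_add_cos_sq γ
  · simp

lemma rotZL_norm (γ : ℝ) (v : E3) : ‖rotZL γ v‖ = ‖v‖ := by
  rw [norm3, norm3]; congr 1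
  simp only [rotZL_apply, mk3_zero, mk3_one, mk3_two]
  linear_combination (v 0 ^ 2 + v 1 ^ 2) * sin_sq_add_cos_sq γ

/-- Rotation about the z-axis by angle γ. -/
def rotZ (γ : ℝ) : E3 ≃ₗᵢ[ℝ] E3 :=
  { LinearEquiv.mk (rotZL γ) (rotZL (-γ))
      (fun v => rotZL_inv γ v)
      (fun v => by have := rotZL_inv (-γ) v; rwa [neg_neg] at this) with
    norm_map' := fun v => rotZL_norm γ v }

@[simp] lemma rotZ_apply (γ : ℝ) (v : E3) :
    rotZ γ v = mk3 (cos γ * v 0 - sin γ * v 1) (sin γ * v 0 + cos γ * v 1) (v 2) := rfl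

lemma rotZ_symm (γ : ℝ) : (rotZ γ).symm = rotZ (-γ) :=
  LinearIsometryEquiv.ext fun _ => rfl

lemma rotZ_comp (γ δ : ℝ) (v : E3) : rotZ γ (rotZ δ v) = rotZ (γ + δ) v := by
  apply ext3 <;> simp [cos_add, sin_add] <;> ring

/-- Rotation by π about the x-axis. -/
def flipX : E3 ≃ₗᵢ[ℝ] E3 :=
  { LinearEquiv.mk
      ({ toFun := fun v => mk3 (v 0) (-v 1) (-v 2)
         map_add' := fun x y => by apply ext3 <;> (simp; try ring)
         map_smul' := fun t x => by apply ext3 <;> (simp; try ring) } : E3 →ₗ[ℝ] E3)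
      (fun v => mk3 (v 0) (-v 1) (-v 2))
      (fun v => by apply ext3 <;> simp)
      (fun v => by apply ext3 <;> simp) with
    norm_map' := fun v => by
      rw [norm3, norm3]; congr 1
      show (v 0)^2 + (-v 1)^2 + (-v 2)^2 = _
      ring }

@[simp] lemma flipX_apply (v : E3) : flipX v = mk3 (v 0) (-v 1) (-v 2) := rfl
@[simp] lemma flipX_symm : flipX.symm = flipX := LinearIsometryEquiv.ext fun _ => rfl

/-! ### The triangle and its cone -/

def ptA (s c : ℝ) : E3 := mk3 s 0 c
def ptB (s c β : ℝ) : E3 := mk3 (s * cos β) (s * sin β) (-c)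
def ptC : E3 := mk3 0 0 1

def ell1 (β : ℝ) (x : E3) : ℝ := sin β * x 0 - cos β * x 1
def ell2 (x : E3) : ℝ := x 1
def ell3 (s c β : ℝ) (x : E3) : ℝ :=
  -(c * sin β) * x 0 + c * (1 + cos β) * x 1 + s * sin β * x 2

def cone (s c β : ℝ) : Set E3 :=
  {x | 0 ≤ ell1 β x ∧ 0 ≤ ell2 x ∧ 0 ≤ ell3 s c β x}

lemma tri_eq (s c β : ℝ) (hs : 0 < s) (hsb : 0 < sin β) :
    sphericalTriangle (ptA s c) (ptB s c β) ptC = Metric.sphere 0 1 ∩ cone s c β := by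
  unfold sphericalTriangle
  congr 1
  ext x
  constructor
  · rintro ⟨a, b, u, ha, hb, hu, rfl⟩
    refine ⟨?_, ?_, ?_⟩ <;>
      · simp only [ell1, ell2, ell3, add3, smul3, ptA, ptB, ptC, mk3_zero, mk3_one, mk3_two]
        nlinarith [mul_nonneg ha hsb.le, mul_nonneg hb hsb.le, mul_nonneg hu hsb.le,
          mul_nonneg (mul_nonneg ha hsb.le) hs.le, mul_nonneg (mul_nonneg hb hsb.le) hs.le,
          mul_nonneg (mul_nonneg hu hsb.le) hs.le, sin_sq_add_cos_sq β]
  · rintro ⟨h1, h2, h3⟩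
    refine ⟨ell1 β x / (s * sin β), ell2 x / (s * sin β), ell3 s c β x / (s * sin β),
      by positivity, by positivity, by positivity, ?_⟩
    have hne : s * sin β ≠ 0 := by positivity
    apply ext3 <;>
      · simp only [ell1, ell2, ell3, add3, smul3, ptA, ptB, ptC, mk3_zero, mk3_one, mk3_two]
        field_simp
        try ring

lemma cone_smul (s c β : ℝ) {r : ℝ} (hr : 0 ≤ r) {x : E3} (hx : x ∈ cone s c β) :
    r • x ∈ cone s c β := by
  obtain ⟨h1, h2, h3⟩ := hx
  refine ⟨?_, ?_, ?_⟩ <;>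
    · simp only [ell1, ell2, ell3, smul3] at *
      nlinarith

/-- The key covariance of the linear functionals under `F = flipX ∘ rotZ(-β)`. -/
lemma ell_F (s c β : ℝ) (v : E3) :
    ell1 β (flipX (rotZ (-β) v)) = ell2 v ∧
    ell2 (flipX (rotZ (-β) v)) = ell1 β v ∧
    ell3 s c β (flipX (rotZ (-β) v)) = -(ell3 s c β v) := by
  have hpy := sin_sq_add_cos_sq β
  refine ⟨?_, ?_, ?_⟩ <;>
      simp only [ell1, ell2, ell3, flipX_apply, rotZ_apply, mk3_zero, mk3_one, mk3_two,
        cos_neg, sin_neg]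
  · linear_combination (v 1) * hpy
  · ring
  · linear_combination (-(c * v 1)) * hpy

/-! ### Interior lemmas -/

lemma mem_image_iff (g : E3 ≃ₗᵢ[ℝ] E3) (S : Set E3) (x : E3) :
    x ∈ g '' S ↔ g.symm x ∈ S := by
  constructor
  · rintro ⟨y, hy, rfl⟩; simpa using hy
  · intro h; exact ⟨g.symm x, h, by simp⟩

lemma image_sphere_inter (g : E3 ≃ₗᵢ[ℝ] E3) (S : Set E3) :
    g '' (Metric.sphere 0 1 ∩ S) = Metric.sphere 0 1 ∩ g '' S := by
  ext x
  rw [mem_image_iff, Set.mem_inter_iff, Set.mem_inter_iff, mem_image_iff]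
  simp [mem_sphere_zero_iff_norm]

lemma mem_interior_of_cone {K : Set E3} (hK : ∀ r : ℝ, 0 < r → ∀ v ∈ K, r • v ∈ K)
    (x : Metric.sphere (0 : E3) 1)
    (hx : x ∈ interior ((↑) ⁻¹' K : Set (Metric.sphere (0 : E3) 1))) :
    (x : E3) ∈ interior K := by
  rw [mem_interior_iff_mem_nhds] at hx ⊢
  rw [nhds_subtype_eq_comap, Filter.mem_comap] at hx
  obtain ⟨t, ht, hts⟩ := hx
  have hxn : ‖(x : E3)‖ = 1 := by
    have := x.2; rwa [mem_sphere_zero_iff_norm] at this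
  have hx0 : (x : E3) ≠ 0 := by intro h; rw [h] at hxn; simp at hxn
  set f : E3 → E3 := fun y => ‖y‖⁻¹ • y with hf
  have hfc : ContinuousAt f (x : E3) := by
    apply ContinuousAt.fun_smul
    · exact (continuous_norm.continuousAt).inv₀ (by rw [hxn]; norm_num)
    · exact continuousAt_id
  have hfx : f (x : E3) = (x : E3) := by rw [hf]; simp [hxn]
  have h1 : f ⁻¹' t ∈ nhds (x : E3) := hfc.preimage_mem_nhds (by rwa [hfx])
  have h2 : {y : E3 | y ≠ 0} ∈ nhds (x : E3) :=
    (isOpen_compl_singleton).mem_nhds hx0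
  refine Filter.mem_of_superset (Filter.inter_mem h1 h2) ?_
  rintro y ⟨hyt, hy0⟩
  have hyn : ‖f y‖ = 1 := by
    rw [hf]; simp [norm_smul, abs_of_nonneg (norm_nonneg y),
      inv_mul_cancel₀ (norm_ne_zero_iff.mpr hy0)]
  have hfy : f y ∈ K := by
    have : (⟨f y, by rwa [mem_sphere_zero_iff_norm]⟩ : Metric.sphere (0 : E3) 1)
        ∈ (↑) ⁻¹' K := hts (by exact hyt)
    exact this
  have := hK ‖y‖ (norm_pos_iff.mpr hy0) _ hfy
  rwa [hf, smul_smul, mul_inv_cancel₀ (norm_ne_zero_iff.mpr hy0), one_smul] at this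

lemma pos_of_mem_interior {K : Set E3} (l : E3 →ₗ[ℝ] ℝ)
    (hK : ∀ v ∈ K, 0 ≤ l v) (w : E3) (hw : l w < 0) {x : E3}
    (hx : x ∈ interior K) : 0 < l x := by
  rcases lt_or_ge 0 (l x) with h | h
  · exact h
  exfalso
  have hc : Continuous fun t : ℝ => x + t • w := by continuity
  have hev : ∀ᶠ t in nhds (0 : ℝ), x + t • w ∈ K := by
    have hnh : K ∈ nhds (x + (0:ℝ) • w) := by
      simp only [zero_smul, add_zero]
      exact mem_interior_iff_mem_nhds.mp hx
    exact hc.continuousAt.preimage_mem_nhds hnh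
  have hev' : ∀ᶠ t in nhdsWithin (0:ℝ) (Set.Ioi 0), x + t • w ∈ K ∧ t ∈ Set.Ioi (0:ℝ) :=
    (hev.filter_mono nhdsWithin_le_nhds).and self_mem_nhdsWithin
  obtain ⟨t, htK, ht0⟩ := hev'.exists
  have h0 : (0:ℝ) < t := ht0
  have := hK _ htK
  rw [map_add, map_smul, smul_eq_mul] at this
  nlinarith [mul_neg_of_pos_of_neg h0 hw]

def ell1L (β : ℝ) : E3 →ₗ[ℝ] ℝ where
  toFun := ell1 β
  map_add' x y := by simp [ell1]; ring
  map_smul' t x := by simp [ell1]; ring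

def ell2L : E3 →ₗ[ℝ] ℝ where
  toFun := ell2
  map_add' x y := by simp [ell2]
  map_smul' t x := by simp [ell2]

def ell3L (s c β : ℝ) : E3 →ₗ[ℝ] ℝ where
  toFun := ell3 s c β
  map_add' x y := by simp [ell3]; ring
  map_smul' t x := by simp [ell3]; ring

lemma interior_cone_strict {s c β : ℝ} (hs : 0 < s) (hsb : 0 < sin β) {x : E3}
    (hx : x ∈ interior (cone s c β)) :
    0 < ell1 β x ∧ 0 < ell2 x ∧ 0 < ell3 s c β x := by
  have hpy := sin_sq_add_cos_sq β
  refine ⟨?_, ?_, ?_⟩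
  · exact pos_of_mem_interior (ell1L β) (fun v hv => hv.1) (mk3 (-sin β) (cos β) 0)
      (by simp [ell1L, ell1]; nlinarith) hx
  · exact pos_of_mem_interior ell2L (fun v hv => hv.2.1) (mk3 0 (-1) 0)
      (by show ell2 (mk3 0 (-1) 0) < 0; simp [ell2]) hx
  · exact pos_of_mem_interior (ell3L s c β) (fun v hv => hv.2.2) (mk3 0 0 (-1))
      (by simp [ell3L, ell3]; positivity) hx

/-! ### Planar-angle lemmas -/

lemma arg_in_sector {β : ℝ} (hb : 0 < β) (hbpi : β < π) {z : ℂ} (him : 0 < z.im)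
    (hl : 0 < sin β * z.re - cos β * z.im) : 0 < z.arg ∧ z.arg < β := by
  have hz : z ≠ 0 := fun h => by simp [h] at him
  have hr : 0 < ‖z‖ := by simpa using norm_pos_iff.mpr hz
  have hcos : Real.cos z.arg = z.re / ‖z‖ := Complex.cos_arg hz
  have hsin : Real.sin z.arg = z.im / ‖z‖ := Complex.sin_arg z
  have hre : z.re = ‖z‖ * Real.cos z.arg := by rw [hcos]; field_simp
  have him' : z.im = ‖z‖ * Real.sin z.arg := by rw [hsin]; field_simp
  have harg1 : -π < z.arg := Complex.neg_pi_lt_arg z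
  have harg2 : z.arg ≤ π := Complex.arg_le_pi z
  have hsinpos : 0 < Real.sin z.arg := by
    rw [him'] at him; nlinarith
  have h1 : 0 < z.arg := by
    by_contra h
    push_neg at h
    exact absurd hsinpos (not_lt.mpr (sin_nonpos_of_nonpos_of_neg_pi_le h harg1.le))
  have hsbma : 0 < Real.sin (β - z.arg) := by
    rw [sin_sub]
    rw [hre, him'] at hl
    nlinarith
  have h2 : z.arg < β := by
    by_contra h
    push_neg at h
    have : Real.sin (β - z.arg) ≤ 0 :=
      sin_nonpos_of_nonpos_of_neg_pi_le (by linarith) (by linarith)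
    linarith
  exact ⟨h1, h2⟩

lemma angle_congruence {r1 r2 θ1 θ2 : ℝ} (hr1 : 0 < r1) (hr2 : 0 < r2)
    (h0 : r1 * Real.cos θ1 = r2 * Real.cos θ2)
    (h1 : r1 * Real.sin θ1 = r2 * Real.sin θ2) :
    ∃ n : ℤ, θ1 - θ2 = 2 * π * n := by
  have hr : r1 = r2 := by
    have h : r1 ^ 2 = r2 ^ 2 := by
      have e1 : r1^2 = (r1*Real.cos θ1)^2 + (r1*Real.sin θ1)^2 := by
        nlinarith [sin_sq_add_cos_sq θ1]
      have e2 : r2^2 = (r2*Real.cos θ2)^2 + (r2*Real.sin θ2)^2 := by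
        nlinarith [sin_sq_add_cos_sq θ2]
      rw [e1, e2, h0, h1]
    nlinarith
  subst hr
  have hc : Real.cos θ1 = Real.cos θ2 := mul_left_cancel₀ (ne_of_gt hr1) h0
  have hs : Real.sin θ1 = Real.sin θ2 := mul_left_cancel₀ (ne_of_gt hr1) h1
  exact Real.Angle.angle_eq_iff_two_pi_dvd_sub.mp (Real.Angle.cos_sin_inj hc hs)

/-! ### Angle computations -/

variable {ca sa cm sm c s β α : ℝ}

section Alg
variable (hca : ca < 0) (hsa : 0 < sa) (hsm : 0 < sm) (hcm : 0 < cm)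
  (ha : sa ^ 2 + ca ^ 2 = 1) (hm : sm ^ 2 + cm ^ 2 = 1)
  (hc : c * (cm * sa) = sm * -ca) (hs2 : s ^ 2 = 1 - c ^ 2) (hs : 0 < s)
  (hc0 : 0 < c)
  (hcb : cos β = 1 - 2 * sm ^ 2) (hsb : sin β = 2 * sm * cm)
  (hα0 : 0 ≤ α) (hαπ : α ≤ π) (hcaα : Real.cos α = ca)

include hs2 hm in
lemma one_sub_p : 1 - (s ^ 2 * (1 - 2 * sm ^ 2) - c ^ 2) = 2 * (sm ^ 2 + c ^ 2 * cm ^ 2) := by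
  linear_combination (2 * sm ^ 2 - 1) * hs2 + (-2 * c ^ 2) * hm

include hs2 hm in
lemma one_add_p : 1 + (s ^ 2 * (1 - 2 * sm ^ 2) - c ^ 2) = 2 * cm ^ 2 * s ^ 2 := by
  linear_combination (-1 : ℝ) * hs2 + (-2 * s ^ 2) * hm

include hs2 hm in
lemma key1 : 1 - (s ^ 2 * (1 - 2 * sm ^ 2) - c ^ 2) ^ 2
    = 4 * cm ^ 2 * s ^ 2 * (sm ^ 2 + c ^ 2 * cm ^ 2) := by
  have h1 := one_sub_p (sm := sm) (cm := cm) (c := c) (s := s) hm hs2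
  have h2 := one_add_p (sm := sm) (cm := cm) (c := c) (s := s) hm hs2
  calc 1 - (s ^ 2 * (1 - 2 * sm ^ 2) - c ^ 2) ^ 2
      = (1 - (s ^ 2 * (1 - 2 * sm ^ 2) - c ^ 2)) * (1 + (s ^ 2 * (1 - 2 * sm ^ 2) - c ^ 2)) := by
        ring
    _ = 2 * (sm ^ 2 + c ^ 2 * cm ^ 2) * (2 * cm ^ 2 * s ^ 2) := by rw [h1, h2]
    _ = 4 * cm ^ 2 * s ^ 2 * (sm ^ 2 + c ^ 2 * cm ^ 2) := by ring

include hca hsa hsm hcm ha hm hc hs2 hs hc0 in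
lemma sqrt_key :
    Real.sqrt (1 - (s ^ 2 * (1 - 2 * sm ^ 2) - c ^ 2) ^ 2) = c * s * (2 * cm ^ 2) / -ca := by
  have hnca : (0:ℝ) < -ca := neg_pos.mpr hca
  have hsq : (c * s * (2 * cm ^ 2) / -ca) ^ 2
      = 1 - (s ^ 2 * (1 - 2 * sm ^ 2) - c ^ 2) ^ 2 := by
    rw [key1 hm hs2, div_pow]
    rw [div_eq_iff (by positivity)]
    linear_combination (4 * cm ^ 2 * s ^ 2 * (c * cm * sa - sm * ca)) * hc
      + (-(4 * cm ^ 2 * s ^ 2 * c ^ 2 * cm ^ 2)) * ha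
  rw [← hsq, Real.sqrt_sq (by positivity)]

include hca hsa hsm hcm ha hm hc hs2 hs hc0 hcb hsb hα0 hαπ hcaα in
lemma cornerA : cornerAngle (ptA s c) (ptB s c β) ptC = α := by
  have hnca : (0:ℝ) < -ca := neg_pos.mpr hca
  have hpyb : sin β ^ 2 + cos β ^ 2 = 1 := sin_sq_add_cos_sq β
  have hBA : ⟪ptB s c β, ptA s c⟫ = s ^ 2 * (1 - 2 * sm ^ 2) - c ^ 2 := by
    rw [inner3]; simp [ptA, ptB]; rw [hcb]; ring
  have hCA : ⟪ptC, ptA s c⟫ = c := by rw [inner3]; simp [ptA, ptC]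
  rw [cornerAngle, hBA, hCA]
  set p : ℝ := s ^ 2 * (1 - 2 * sm ^ 2) - c ^ 2 with hp
  have hp' : p = s ^ 2 * cos β - c ^ 2 := by rw [hp, hcb]
  have hw : ptC - c • ptA s c = mk3 (-(c * s)) 0 (s ^ 2) := by
    apply ext3 <;> simp [ptA, ptC]
    linear_combination -hs2
  have hv : ptB s c β - p • ptA s c
      = mk3 (s * cos β - p * s) (s * sin β) (-c - p * c) := by
    apply ext3 <;> simp [ptA, ptB] <;> ring
  rw [hw, hv]
  have hnw : ‖mk3 (-(c * s)) 0 (s ^ 2)‖ = s := by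
    rw [norm3]
    simp only [mk3_zero, mk3_one, mk3_two]
    rw [show (-(c * s)) ^ 2 + (0:ℝ) ^ 2 + (s ^ 2) ^ 2 = s ^ 2 by linear_combination s ^ 2 * hs2]
    exact Real.sqrt_sq hs.le
  have hnv : ‖mk3 (s * cos β - p * s) (s * sin β) (-c - p * c)‖
      = c * s * (2 * cm ^ 2) / -ca := by
    rw [norm3]
    simp only [mk3_zero, mk3_one, mk3_two]
    rw [show (s * cos β - p * s) ^ 2 + (s * sin β) ^ 2 + (-c - p * c) ^ 2
        = 1 - p ^ 2 by linear_combination (p ^ 2 + 1) * hs2 + s ^ 2 * hpyb + (2 * p) * hp']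
    exact sqrt_key hca hsa hsm hcm ha hm hc hs2 hs hc0
  have hinner : ⟪mk3 (s * cos β - p * s) (s * sin β) (-c - p * c),
      mk3 (-(c * s)) 0 (s ^ 2)⟫ = -(c * s ^ 2 * (2 * cm ^ 2)) := by
    simp only [inner3, mk3_zero, mk3_one, mk3_two]
    have h1cb : 1 + cos β = 2 * cm ^ 2 := by rw [hcb]; linarith [hm]
    linear_combination (-(c * s ^ 2)) * h1cb
  rw [InnerProductGeometry.angle, hinner, hnv, hnw]
  have : -(c * s ^ 2 * (2 * cm ^ 2)) / (c * s * (2 * cm ^ 2) / -ca * s) = ca := by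
    field_simp
  rw [this, ← hcaα, Real.arccos_cos hα0 hαπ]

include hca hsa hsm hcm ha hm hc hs2 hs hc0 hcb hsb hα0 hαπ hcaα in
lemma cornerB : cornerAngle (ptB s c β) (ptA s c) ptC = π - α := by
  have hnca : (0:ℝ) < -ca := neg_pos.mpr hca
  have hpyb : sin β ^ 2 + cos β ^ 2 = 1 := sin_sq_add_cos_sq β
  have hAB : ⟪ptA s c, ptB s c β⟫ = s ^ 2 * (1 - 2 * sm ^ 2) - c ^ 2 := by
    rw [inner3]; simp [ptA, ptB]; rw [hcb]; ring
  have hCB : ⟪ptC, ptB s c β⟫ = -c := by rw [inner3]; simp [ptA, ptB, ptC]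
  rw [cornerAngle, hAB, hCB]
  set p : ℝ := s ^ 2 * (1 - 2 * sm ^ 2) - c ^ 2 with hp
  have hp' : p = s ^ 2 * cos β - c ^ 2 := by rw [hp, hcb]
  have h1cb : 1 + cos β = 2 * cm ^ 2 := by rw [hcb]; linarith [hm]
  have hv : ptA s c - p • ptB s c β
      = mk3 (s - p * (s * cos β)) (-(p * (s * sin β))) (c + p * c) := by
    apply ext3 <;> simp [ptA, ptB] <;> ring
  have hw : ptC - (-c) • ptB s c β
      = mk3 (c * (s * cos β)) (c * (s * sin β)) (s ^ 2) := by
    apply ext3 <;> simp [ptA, ptB, ptC]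
    linear_combination -hs2
  rw [hv, hw]
  have hnw : ‖mk3 (c * (s * cos β)) (c * (s * sin β)) (s ^ 2)‖ = s := by
    rw [norm3]
    simp only [mk3_zero, mk3_one, mk3_two]
    rw [show (c * (s * cos β)) ^ 2 + (c * (s * sin β)) ^ 2 + (s ^ 2) ^ 2 = s ^ 2 by
      linear_combination (c ^ 2 * s ^ 2) * hpyb + s ^ 2 * hs2]
    exact Real.sqrt_sq hs.le
  have hnv : ‖mk3 (s - p * (s * cos β)) (-(p * (s * sin β))) (c + p * c)‖
      = c * s * (2 * cm ^ 2) / -ca := by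
    rw [norm3]
    simp only [mk3_zero, mk3_one, mk3_two]
    rw [show (s - p * (s * cos β)) ^ 2 + (-(p * (s * sin β))) ^ 2 + (c + p * c) ^ 2
        = 1 - p ^ 2 by
      linear_combination (p ^ 2 + 1) * hs2 + (p ^ 2 * s ^ 2) * hpyb + (2 * p) * hp']
    exact sqrt_key hca hsa hsm hcm ha hm hc hs2 hs hc0
  have hinner : ⟪mk3 (s - p * (s * cos β)) (-(p * (s * sin β))) (c + p * c),
      mk3 (c * (s * cos β)) (c * (s * sin β)) (s ^ 2)⟫ = c * s ^ 2 * (2 * cm ^ 2) := by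
    simp only [inner3, mk3_zero, mk3_one, mk3_two]
    linear_combination (c * s ^ 2) * h1cb + (-(p * c * s ^ 2)) * hpyb
  rw [InnerProductGeometry.angle, hinner, hnv, hnw]
  have hr : c * s ^ 2 * (2 * cm ^ 2) / (c * s * (2 * cm ^ 2) / -ca * s) = -ca := by
    field_simp
  rw [hr, show -ca = Real.cos (π - α) by rw [Real.cos_pi_sub, hcaα],
    Real.arccos_cos (by linarith) (by linarith)]

end Alg

section AngC
variable (hs : 0 < s) (hβ0 : 0 ≤ β) (hβπ : β ≤ π)

include hs hβ0 hβπ in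
lemma cornerC (hs2 : s ^ 2 = 1 - c ^ 2) :
    cornerAngle ptC (ptA s c) (ptB s c β) = β := by
  have hpyb : sin β ^ 2 + cos β ^ 2 = 1 := sin_sq_add_cos_sq β
  have hAC : ⟪ptA s c, ptC⟫ = c := by rw [inner3]; simp [ptA, ptC]
  have hBC : ⟪ptB s c β, ptC⟫ = -c := by rw [inner3]; simp [ptB, ptC]
  rw [cornerAngle, hAC, hBC]
  have hv : ptA s c - c • ptC = mk3 s 0 0 := by
    apply ext3 <;> simp [ptA, ptC]
  have hw : ptB s c β - (-c) • ptC = mk3 (s * cos β) (s * sin β) 0 := by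
    apply ext3 <;> simp [ptB, ptC]
  rw [hv, hw]
  have hnv : ‖mk3 s 0 0‖ = s := by
    rw [norm3]; simp only [mk3_zero, mk3_one, mk3_two]
    rw [show s ^ 2 + (0:ℝ) ^ 2 + (0:ℝ) ^ 2 = s ^ 2 by ring]
    exact Real.sqrt_sq hs.le
  have hnw : ‖mk3 (s * cos β) (s * sin β) 0‖ = s := by
    rw [norm3]; simp only [mk3_zero, mk3_one, mk3_two]
    rw [show (s * cos β) ^ 2 + (s * sin β) ^ 2 + (0:ℝ) ^ 2 = s ^ 2 by
      linear_combination s ^ 2 * hpyb]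
    exact Real.sqrt_sq hs.le
  have hinner : ⟪mk3 s 0 0, mk3 (s * cos β) (s * sin β) 0⟫ = s ^ 2 * cos β := by
    simp only [inner3, mk3_zero, mk3_one, mk3_two]; ring
  rw [InnerProductGeometry.angle, hinner, hnv, hnw]
  have hr : s ^ 2 * Real.cos β / (s * s) = Real.cos β := by
    field_simp
  rw [hr, Real.arccos_cos hβ0 hβπ]

end AngC

lemma linind {s c β : ℝ} (hs : 0 < s) (hsb : 0 < sin β) :
    LinearIndependent ℝ ![ptA s c, ptB s c β, ptC] := by
  rw [Fintype.linearIndependent_iff]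
  intro g hg
  have h0 := congrArg (fun v : E3 => v 0) hg
  have h1 := congrArg (fun v : E3 => v 1) hg
  have h2 := congrArg (fun v : E3 => v 2) hg
  rw [Fin.sum_univ_three] at h0 h1 h2
  simp only [Matrix.cons_val_zero, Matrix.cons_val_one, Matrix.head_cons,
    Matrix.cons_val_two, Matrix.tail_cons, add3, smul3, ptA, ptB, ptC,
    mk3_zero, mk3_one, mk3_two, zero3] at h0 h1 h2
  have hg1 : g 1 = 0 := by
    have := mul_eq_zero.mp (by linarith : g 1 * (s * sin β) = 0)
    rcases this with h | h
    · exact h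
    · exact absurd h (by positivity)
  have hg0 : g 0 = 0 := by
    rw [hg1] at h0
    have := mul_eq_zero.mp (by linarith : g 0 * s = 0)
    rcases this with h | h
    · exact h
    · exact absurd h hs.ne'
  have hg2 : g 2 = 0 := by rw [hg0, hg1] at h2; linarith
  intro i; fin_cases i <;> assumption

end TwoLayerAux
end

set_option maxHeartbeats 2000000 in
open TwoLayerAux Real in
/-- Existence of the two-layer earth map tilings with `2k` tiles, for a triangle with
angles `(α, π − α, 2π/k)`. -/
theorem two_layer_earth_map_tiling (k : ℕ) (hk : 3 ≤ k) (α : ℝ)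
    (h₁ : Real.pi / 2 < α) (h₂ : α < Real.pi - Real.pi / k) :
    ∃ A B C : EuclideanSpace ℝ (Fin 3),
      LinearIndependent ℝ ![A, B, C] ∧ ‖A‖ = 1 ∧ ‖B‖ = 1 ∧ ‖C‖ = 1 ∧
      cornerAngle A B C = α ∧
      cornerAngle B A C = Real.pi - α ∧
      cornerAngle C A B = 2 * Real.pi / k ∧
      ∃ T : Fin (2 * k) → Set (EuclideanSpace ℝ (Fin 3)),
        (∀ i, ∃ g : EuclideanSpace ℝ (Fin 3) ≃ₗᵢ[ℝ] EuclideanSpace ℝ (Fin 3),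
          T i = g '' sphericalTriangle A B C) ∧
        (⋃ i, T i) = Metric.sphere (0 : EuclideanSpace ℝ (Fin 3)) 1 ∧
        Pairwise fun i j => Disjoint
          (interior ((↑) ⁻¹' T i : Set (Metric.sphere (0 : EuclideanSpace ℝ (Fin 3)) 1)))
          (interior ((↑) ⁻¹' T j : Set (Metric.sphere (0 : EuclideanSpace ℝ (Fin 3)) 1))) := by
  classical
  have hπ := Real.pi_pos
  have hk3 : (3:ℝ) ≤ (k:ℝ) := by exact_mod_cast hk
  have hk0 : (0:ℝ) < (k:ℝ) := by linarith
  set m : ℝ := Real.pi / k with hmdef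
  have hm0 : 0 < m := by positivity
  have hm3 : m ≤ Real.pi / 3 := by
    rw [hmdef, div_le_div_iff₀ hk0 (by norm_num)]
    nlinarith
  have hmhalf : m < Real.pi / 2 := by linarith
  have hαπ : α < Real.pi := by linarith
  have hα0 : 0 < α := by linarith
  set ca := Real.cos α with hcadef
  set sa := Real.sin α with hsadef
  set cm := Real.cos m with hcmdef
  set sm := Real.sin m with hsmdef
  have hca : ca < 0 := Real.cos_neg_of_pi_div_two_lt_of_lt h₁ (by linarith)
  have hsa : 0 < sa := Real.sin_pos_of_pos_of_lt_pi hα0 hαπ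
  have hsm : 0 < sm := Real.sin_pos_of_pos_of_lt_pi hm0 (by linarith)
  have hcm : 0 < cm := Real.cos_pos_of_mem_Ioo ⟨by linarith, hmhalf⟩
  have ha1 : sa ^ 2 + ca ^ 2 = 1 := Real.sin_sq_add_cos_sq α
  have hm1 : sm ^ 2 + cm ^ 2 = 1 := Real.sin_sq_add_cos_sq m
  set c := sm * -ca / (cm * sa) with hcdef
  have hc0 : 0 < c := div_pos (mul_pos hsm (neg_pos.mpr hca)) (mul_pos hcm hsa)
  have hcrel : c * (cm * sa) = sm * -ca := by
    rw [hcdef]; field_simp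
  have hsum : 0 < Real.sin (α + m) :=
    Real.sin_pos_of_pos_of_lt_pi (by linarith) (by linarith [h₂])
  have hsinadd : Real.sin (α + m) = sa * cm + ca * sm := by
    rw [Real.sin_add]
  have hc1 : c < 1 := by
    rw [hcdef, div_lt_one (mul_pos hcm hsa)]
    have h := hsum
    rw [hsinadd] at h
    nlinarith [h]
  set s := Real.sqrt (1 - c ^ 2) with hsdef
  have hc2 : c ^ 2 < 1 := by
    exact pow_lt_one₀ (le_of_lt hc0) hc1 (two_ne_zero)
  have hs2 : s ^ 2 = 1 - c ^ 2 := Real.sq_sqrt (by linarith)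
  have hs : 0 < s := Real.sqrt_pos.mpr (by linarith)
  set β := 2 * m with hβdef
  have hβval : β = 2 * Real.pi / k := by rw [hβdef, hmdef]; ring
  have hβ0 : 0 < β := by rw [hβdef]; linarith
  have hβpi : β < Real.pi := by rw [hβdef]; linarith
  have hcb : Real.cos β = 1 - 2 * sm ^ 2 := by
    rw [hβdef, Real.cos_two_mul, ← hcmdef]; linarith [hm1]
  have hsb : Real.sin β = 2 * sm * cm := by
    rw [hβdef, Real.sin_two_mul]; try ring
  have hsbpos : 0 < Real.sin β := by rw [hsb]; positivity
  have hkβ : (k:ℝ) * β = 2 * Real.pi := by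
    rw [hβdef, hmdef]; field_simp; try ring
  clear_value m ca sa cm sm c s β
  refine ⟨ptA s c, ptB s c β, ptC, linind hs hsbpos, ?_, ?_, ?_,
    cornerA hca hsa hsm hcm ha1 hm1 hcrel hs2 hs hc0 hcb hsb hα0.le hαπ.le hcadef.symm,
    cornerB hca hsa hsm hcm ha1 hm1 hcrel hs2 hs hc0 hcb hsb hα0.le hαπ.le hcadef.symm,
    ?_, ?_⟩
  · rw [norm3]; simp only [ptA, mk3_zero, mk3_one, mk3_two]
    rw [show s ^ 2 + (0:ℝ) ^ 2 + c ^ 2 = 1 by rw [hs2]; ring]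
    exact Real.sqrt_one
  · rw [norm3]; simp only [ptB, mk3_zero, mk3_one, mk3_two]
    rw [show (s * Real.cos β) ^ 2 + (s * Real.sin β) ^ 2 + (-c) ^ 2 = 1 by
      linear_combination s ^ 2 * Real.sin_sq_add_cos_sq β + hs2]
    exact Real.sqrt_one
  · rw [norm3]; simp only [ptC, mk3_zero, mk3_one, mk3_two]
    rw [show (0:ℝ) ^ 2 + (0:ℝ) ^ 2 + (1:ℝ) ^ 2 = 1 by ring]
    exact Real.sqrt_one
  · rw [← hβval]
    exact cornerC hs hβ0.le hβpi.le hs2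
  -- ### The tiling
  set Δ := sphericalTriangle (ptA s c) (ptB s c β) ptC with hΔdef
  have htri : Δ = Metric.sphere 0 1 ∩ cone s c β := tri_eq s c β hs hsbpos
  set G : Fin (2*k) → (E3 ≃ₗᵢ[ℝ] E3) := fun i =>
    if i.val % 2 = 0 then rotZ ((i.val / 2 : ℕ) * β)
    else flipX.trans (rotZ (((i.val / 2 : ℕ) + 1) * β)) with hGdef
  refine ⟨fun i => G i '' Δ, fun i => ⟨G i, rfl⟩, ?_, ?_⟩
  · -- the union of the tiles is the sphere
    apply Set.Subset.antisymm
    · refine Set.iUnion_subset fun i => ?_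
      rintro x ⟨y, hy, rfl⟩
      rw [htri] at hy
      have h1 : ‖y‖ = 1 := mem_sphere_zero_iff_norm.mp hy.1
      rw [mem_sphere_zero_iff_norm, LinearIsometryEquiv.norm_map]
      exact h1
    · intro x hx
      have hxn : ‖x‖ = 1 := mem_sphere_zero_iff_norm.mp hx
      have cover : ∀ q : ℕ, q < k →
          0 ≤ ell1 β (rotZ (-((q:ℝ) * β)) x) → 0 ≤ ell2 (rotZ (-((q:ℝ) * β)) x) →
          x ∈ ⋃ i, G i '' Δ := by
        intro q hq h1 h2
        set y := rotZ (-((q:ℝ) * β)) x with hydef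
        have hyn : ‖y‖ = 1 := by rw [hydef, LinearIsometryEquiv.norm_map]; exact hxn
        have hq20 : (2 * q) % 2 = 0 := by omega
        have hq2d : (2 * q) / 2 = q := by omega
        have hq21 : ¬ ((2 * q + 1) % 2 = 0) := by omega
        have hq2d1 : (2 * q + 1) / 2 = q := by omega
        rcases le_or_gt 0 (ell3 s c β y) with h3 | h3
        · refine Set.mem_iUnion.mpr ⟨⟨2 * q, by omega⟩, ?_⟩
          rw [mem_image_iff]
          have hGv : G ⟨2 * q, by omega⟩ = rotZ ((q:ℝ) * β) := by
            rw [hGdef]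
            simp only [hq20, hq2d, if_pos]
          rw [hGv, rotZ_symm, htri]
          exact ⟨by rw [mem_sphere_zero_iff_norm]; exact hyn, h1, h2, h3⟩
        · refine Set.mem_iUnion.mpr ⟨⟨2 * q + 1, by omega⟩, ?_⟩
          rw [mem_image_iff]
          have hGv : G ⟨2 * q + 1, by omega⟩ = flipX.trans (rotZ (((q:ℝ) + 1) * β)) := by
            rw [hGdef]
            simp only [hq21, hq2d1, if_neg, if_false]
          rw [hGv]
          have hsymm : (flipX.trans (rotZ (((q:ℝ) + 1) * β))).symm x
              = flipX (rotZ (-β) y) := by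
            have h' : (flipX.trans (rotZ (((q:ℝ) + 1) * β))).symm x
                = flipX ((rotZ (((q:ℝ) + 1) * β)).symm x) := rfl
            rw [h', rotZ_symm, hydef, rotZ_comp]
            congr 2
            ring
          rw [hsymm, htri]
          obtain ⟨e1, e2, e3⟩ := ell_F s c β y
          refine ⟨?_, ?_, ?_, ?_⟩
          · rw [mem_sphere_zero_iff_norm, LinearIsometryEquiv.norm_map,
              LinearIsometryEquiv.norm_map]
            exact hyn
          · rw [e1]; exact h2
          · rw [e2]; exact h1
          · rw [e3]; linarith
      by_cases hz0 : x 0 = 0 ∧ x 1 = 0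
      · have hy0 : rotZ (-(((0:ℕ):ℝ) * β)) x = x := by
          apply ext3 <;> simp
        apply cover 0 (by omega)
        · rw [hy0]; simp [ell1, hz0.1, hz0.2]
        · rw [hy0]; simp [ell2, hz0.2]
      · set z : ℂ := ⟨x 0, x 1⟩ with hzdef
        have hz : z ≠ 0 := by
          intro h
          exact hz0 ⟨congrArg Complex.re h, congrArg Complex.im h⟩
        have hr : 0 < ‖z‖ := by simpa using norm_pos_iff.mpr hz
        have hre : ‖z‖ * Real.cos z.arg = x 0 := by
          rw [Complex.cos_arg hz]
          field_simp
          rfl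
        have him : ‖z‖ * Real.sin z.arg = x 1 := by
          rw [Complex.sin_arg]
          field_simp
          rfl
        set θ : ℝ := if 0 ≤ z.arg then z.arg else z.arg + 2 * Real.pi with hθdef
        have hθcos : Real.cos θ = Real.cos z.arg := by
          rw [hθdef]; split_ifs with h
          · rfl
          · exact Real.cos_add_two_pi _
        have hθsin : Real.sin θ = Real.sin z.arg := by
          rw [hθdef]; split_ifs with h
          · rfl
          · exact Real.sin_add_two_pi _
        have hθ0 : 0 ≤ θ := by
          rw [hθdef]; split_ifs with h
          · exact h
          · linarith [Complex.neg_pi_lt_arg z]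
        have hθlt : θ < 2 * Real.pi := by
          rw [hθdef]; split_ifs with h
          · linarith [Complex.arg_le_pi z]
          · push_neg at h; linarith
        set q : ℕ := (⌊θ / β⌋).toNat with hqdef
        have hfl0 : (0:ℤ) ≤ ⌊θ / β⌋ := Int.floor_nonneg.mpr (div_nonneg hθ0 hβ0.le)
        have hqr : ((q:ℕ):ℝ) = ((⌊θ / β⌋ : ℤ) : ℝ) := by
          rw [hqdef]
          exact_mod_cast congrArg (fun n : ℤ => (n : ℝ)) (Int.toNat_of_nonneg hfl0)
        have hq1 : (q:ℝ) ≤ θ / β := by rw [hqr]; exact Int.floor_le _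
        have hq2 : θ / β < (q:ℝ) + 1 := by
          rw [hqr]; exact_mod_cast Int.lt_floor_add_one (θ / β)
        have hqk : q < k := by
          have hA : θ / β < (k:ℝ) := by
            rw [div_lt_iff₀ hβ0]
            calc θ < 2 * Real.pi := hθlt
            _ = (k:ℝ) * β := hkβ.symm
          have : (q:ℝ) < (k:ℝ) := lt_of_le_of_lt hq1 hA
          exact_mod_cast this
        have hlow : (q:ℝ) * β ≤ θ := (le_div_iff₀ hβ0).mp hq1
        have hhigh : θ < ((q:ℝ) + 1) * β := (div_lt_iff₀ hβ0).mp hq2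
        set ψ : ℝ := θ - (q:ℝ) * β with hψdef
        have hψ0 : 0 ≤ ψ := by rw [hψdef]; linarith
        have hψβ : ψ < β := by rw [hψdef]; linarith
        clear_value θ ψ
        have hy0c : (rotZ (-((q:ℝ) * β)) x) 0 = ‖z‖ * Real.cos ψ := by
          rw [rotZ_apply]; simp only [mk3_zero]
          rw [← hre, ← him, hψdef, Real.cos_sub, ← hθcos, ← hθsin,
            Real.cos_neg, Real.sin_neg]
          ring
        have hy1c : (rotZ (-((q:ℝ) * β)) x) 1 = ‖z‖ * Real.sin ψ := by
          rw [rotZ_apply]; simp only [mk3_one]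
          rw [← hre, ← him, hψdef, Real.sin_sub, ← hθcos, ← hθsin,
            Real.cos_neg, Real.sin_neg]
          ring
        apply cover q hqk
        · show 0 ≤ Real.sin β * (rotZ (-((q:ℝ) * β)) x) 0
            - Real.cos β * (rotZ (-((q:ℝ) * β)) x) 1
          rw [hy0c, hy1c]
          have hsin : Real.sin β * (‖z‖ * Real.cos ψ)
              - Real.cos β * (‖z‖ * Real.sin ψ)
              = ‖z‖ * Real.sin (β - ψ) := by
            rw [Real.sin_sub]; ring
          rw [hsin]
          exact mul_nonneg hr.le (Real.sin_nonneg_of_nonneg_of_le_pi (by linarith)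
            (by linarith))
        · show 0 ≤ (rotZ (-((q:ℝ) * β)) x) 1
          rw [hy1c]
          exact mul_nonneg hr.le (Real.sin_nonneg_of_nonneg_of_le_pi hψ0
            (by linarith))
  · -- pairwise disjoint interiors
    intro i j hij
    rw [Set.disjoint_left]
    intro x hxi hxj
    have key : ∀ a : Fin (2*k),
        x ∈ interior ((↑) ⁻¹' (G a '' Δ) : Set (Metric.sphere (0:E3) 1)) →
        0 < ell1 β (rotZ (-((↑(a.val / 2) : ℝ) * β)) ↑x) ∧
        0 < ell2 (rotZ (-((↑(a.val / 2) : ℝ) * β)) ↑x) ∧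
        ((a.val % 2 = 0 ∧ 0 < ell3 s c β (rotZ (-((↑(a.val / 2) : ℝ) * β)) ↑x)) ∨
         (a.val % 2 = 1 ∧ ell3 s c β (rotZ (-((↑(a.val / 2) : ℝ) * β)) ↑x) < 0)) := by
      intro a hxa
      have hpre : ((↑) ⁻¹' (G a '' Δ) : Set (Metric.sphere (0:E3) 1))
          = (↑) ⁻¹' (G a '' cone s c β) := by
        rw [htri, image_sphere_inter]
        ext w
        simp only [Set.mem_preimage, Set.mem_inter_iff]
        have hw2 := w.2
        tauto
      rw [hpre] at hxa
      have hconeK : ∀ r : ℝ, 0 < r → ∀ v ∈ G a '' cone s c β,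
          r • v ∈ G a '' cone s c β := by
        rintro r hr v ⟨u, hu, rfl⟩
        exact ⟨r • u, cone_smul s c β hr.le hu, by rw [LinearIsometryEquiv.map_smul]⟩
      have hint : (x : E3) ∈ interior (G a '' cone s c β) :=
        mem_interior_of_cone hconeK x hxa
      have himg : G a '' cone s c β = (G a).toHomeomorph '' cone s c β := rfl
      rw [himg, ← Homeomorph.image_interior] at hint
      obtain ⟨u, hu, hux⟩ := hint
      have huval : u = (G a).symm ↑x := by
        have : (G a) u = ↑x := hux
        rw [← this, LinearIsometryEquiv.symm_apply_apply]
      rw [huval] at hu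
      by_cases hpar : a.val % 2 = 0
      · have hGa : G a = rotZ ((↑(a.val / 2) : ℝ) * β) := by
          rw [hGdef]; simp only [hpar, if_pos]
        rw [hGa, rotZ_symm] at hu
        have hstrict := interior_cone_strict hs hsbpos hu
        exact ⟨hstrict.1, hstrict.2.1, Or.inl ⟨hpar, hstrict.2.2⟩⟩
      · have hpar1 : a.val % 2 = 1 := by omega
        have hGa : G a = flipX.trans (rotZ (((↑(a.val / 2) : ℝ) + 1) * β)) := by
          rw [hGdef]; simp only [hpar, if_neg, if_false]
        rw [hGa] at hu
        have hsymm : (flipX.trans (rotZ (((↑(a.val / 2) : ℝ) + 1) * β))).symm ↑x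
            = flipX (rotZ (-β) (rotZ (-((↑(a.val / 2) : ℝ) * β)) ↑x)) := by
          have h' : (flipX.trans (rotZ (((↑(a.val / 2) : ℝ) + 1) * β))).symm ↑x
              = flipX ((rotZ (((↑(a.val / 2) : ℝ) + 1) * β)).symm ↑x) := rfl
          rw [h', rotZ_symm, rotZ_comp,
            show -β + -((↑(a.val / 2) : ℝ) * β) = -(((↑(a.val / 2) : ℝ) + 1) * β) by ring]
        rw [hsymm] at hu
        obtain ⟨hs1, hs2', hs3⟩ := interior_cone_strict hs hsbpos hu
        obtain ⟨e1, e2, e3⟩ := ell_F s c β (rotZ (-((↑(a.val / 2) : ℝ) * β)) ↑x)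
        rw [e1] at hs1
        rw [e2] at hs2'
        rw [e3] at hs3
        exact ⟨hs2', hs1, Or.inr ⟨hpar1, by linarith only [hs3]⟩⟩
    obtain ⟨hi1, hi2, hi3⟩ := key i hxi
    obtain ⟨hj1, hj2, hj3⟩ := key j hxj
    by_cases hq : i.val / 2 = j.val / 2
    · have hne : i.val ≠ j.val := fun h => hij (Fin.ext h)
      rcases hi3 with ⟨hpi, h3i⟩ | ⟨hpi, h3i⟩ <;> rcases hj3 with ⟨hpj, h3j⟩ | ⟨hpj, h3j⟩
      · omega
      · rw [hq] at h3i; linarith only [h3i, h3j]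
      · rw [hq] at h3i; linarith only [h3i, h3j]
      · omega
    · -- distinct lunes: sector argument
      set qi : ℕ := i.val / 2 with hqidef
      set qj : ℕ := j.val / 2 with hqjdef
      set yi := rotZ (-((qi:ℝ) * β)) (↑x : E3) with hyidef
      set yj := rotZ (-((qj:ℝ) * β)) (↑x : E3) with hyjdef
      set zi : ℂ := ⟨yi 0, yi 1⟩ with hzidef
      set zj : ℂ := ⟨yj 0, yj 1⟩ with hzjdef
      have hzi_im : 0 < zi.im := hi2
      have hzj_im : 0 < zj.im := hj2
      have hzi_l : 0 < Real.sin β * zi.re - Real.cos β * zi.im := hi1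
      have hzj_l : 0 < Real.sin β * zj.re - Real.cos β * zj.im := hj1
      obtain ⟨hθi0, hθiβ⟩ := arg_in_sector hβ0 hβpi hzi_im hzi_l
      obtain ⟨hθj0, hθjβ⟩ := arg_in_sector hβ0 hβpi hzj_im hzj_l
      have hzi : zi ≠ 0 := by
        intro h
        rw [h] at hzi_im
        exact lt_irrefl 0 (by simpa using hzi_im)
      have hzj : zj ≠ 0 := by
        intro h
        rw [h] at hzj_im
        exact lt_irrefl 0 (by simpa using hzj_im)
      have hri : 0 < ‖zi‖ := by simpa using norm_pos_iff.mpr hzi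
      have hrj : 0 < ‖zj‖ := by simpa using norm_pos_iff.mpr hzj
      have hrei : ‖zi‖ * Real.cos zi.arg = yi 0 := by
        rw [Complex.cos_arg hzi]; field_simp; rfl
      have himi : ‖zi‖ * Real.sin zi.arg = yi 1 := by
        rw [Complex.sin_arg]; field_simp; rfl
      have hrej : ‖zj‖ * Real.cos zj.arg = yj 0 := by
        rw [Complex.cos_arg hzj]; field_simp; rfl
      have himj : ‖zj‖ * Real.sin zj.arg = yj 1 := by
        rw [Complex.sin_arg]; field_simp; rfl
      have hxyi : rotZ ((qi:ℝ) * β) yi = (↑x : E3) := by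
        rw [hyidef, rotZ_comp, show (qi:ℝ) * β + -((qi:ℝ) * β) = 0 by ring]
        apply ext3 <;> simp
      have hxyj : rotZ ((qj:ℝ) * β) yj = (↑x : E3) := by
        rw [hyjdef, rotZ_comp, show (qj:ℝ) * β + -((qj:ℝ) * β) = 0 by ring]
        apply ext3 <;> simp
      have hxi0 : (↑x : E3) 0 = ‖zi‖ * Real.cos (zi.arg + (qi:ℝ) * β) := by
        rw [← hxyi, rotZ_apply]; simp only [mk3_zero]
        rw [← hrei, ← himi, Real.cos_add]; ring
      have hxi1 : (↑x : E3) 1 = ‖zi‖ * Real.sin (zi.arg + (qi:ℝ) * β) := by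
        rw [← hxyi, rotZ_apply]; simp only [mk3_one]
        rw [← hrei, ← himi, Real.sin_add]; ring
      have hxj0 : (↑x : E3) 0 = ‖zj‖ * Real.cos (zj.arg + (qj:ℝ) * β) := by
        rw [← hxyj, rotZ_apply]; simp only [mk3_zero]
        rw [← hrej, ← himj, Real.cos_add]; ring
      have hxj1 : (↑x : E3) 1 = ‖zj‖ * Real.sin (zj.arg + (qj:ℝ) * β) := by
        rw [← hxyj, rotZ_apply]; simp only [mk3_one]
        rw [← hrej, ← himj, Real.sin_add]; ring
      obtain ⟨n, hn⟩ := angle_congruence hri hrj (hxi0.symm.trans hxj0)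
        (hxi1.symm.trans hxj1)
      -- integer contradiction
      have hqik : qi < k := by omega
      have hqjk : qj < k := by omega
      set N : ℤ := n * k - (qi:ℤ) + (qj:ℤ) with hNdef
      clear_value N
      have hNr : (N:ℝ) * β = zi.arg - zj.arg := by
        rw [hNdef]
        push_cast
        linear_combination (n:ℝ) * hkβ - hn
      have habs : |(N:ℝ) * β| < β := by
        rw [hNr, abs_lt]
        constructor <;> linarith only [hθi0, hθiβ, hθj0, hθjβ]
      have habs1 : |(N:ℝ)| < 1 := by
        rw [abs_mul, abs_of_pos hβ0, ← one_mul β] at habs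
        exact lt_of_mul_lt_mul_right (by linarith only [habs]) hβ0.le
      have hN0 : N = 0 := by
        have h' : |N| < 1 := by exact_mod_cast (by rwa [← Int.cast_abs] at habs1 :
          ((|N| : ℤ) : ℝ) < 1)
        rw [abs_lt] at h'
        omega
      have hqq : (qi:ℤ) ≠ (qj:ℤ) := by
        intro h
        exact hq (by exact_mod_cast h)
      have hnk : n * (k:ℤ) = (qi:ℤ) - (qj:ℤ) := by
        have hz := hN0
        rw [hNdef] at hz
        linear_combination hz
      rcases lt_trichotomy n 0 with hn0 | hn0 | hn0
      · have h1 : n ≤ -1 := by omega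
        have h2 : n * (k:ℤ) ≤ (-1) * (k:ℤ) :=
          mul_le_mul_of_nonneg_right h1 (by positivity)
        have h3 : (0:ℤ) ≤ (qi:ℤ) := by positivity
        have h4 : (qj:ℤ) < k := by exact_mod_cast hqjk
        linarith only [hnk, h2, h3, h4]
      · rw [hn0] at hnk; simp at hnk; omega
      · have h1 : 1 ≤ n := by omega
        have h2 : (1:ℤ) * (k:ℤ) ≤ n * (k:ℤ) :=
          mul_le_mul_of_nonneg_right h1 (by positivity)
        have h3 : (qi:ℤ) < k := by exact_mod_cast hqik
        have h4 : (0:ℤ) ≤ (qj:ℤ) := by positivity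
        linarith only [hnk, h2, h3, h4]
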